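/- Let {ξ_l} be independent real random variables and λ_l > 0 a sequence. Let A = {sup_l λ_l|ξ_l| > r} and B = {sup_l λ_l|ξ_l| > 2r}. If for every m the event C_m = {λ_m|ξ_m| > 2r} satisfies P(C_m) ≤ (P(E_m))^2 with E_m = {λ_m|ξ_m| > r}, then P(B) ≤ 2 (P(A))^2. -/

import Mathlib

open MeasureTheory ProbabilityTheory

/-- Elementary real inequality: for `0 ≤ x ≤ 1/2`, `exp (-2x) ≤ 1 - x`. -/
lemma exp_neg_two_mul_le {x : ℝ} (hx0 : 0 ≤ x) (hx : x ≤ 1/2) :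
    Real.exp (-(2*x)) ≤ 1 - x := by
  have h1 : 1 + 2*x ≤ Real.exp (2*x) := by
    have := Real.add_one_le_exp (2*x); linarith
  have hpos : (0:ℝ) < 1 + 2*x := by linarith
  have h2 : Real.exp (-(2*x)) ≤ 1 / (1 + 2*x) := by
    rw [Real.exp_neg, one_div]
    exact inv_anti₀ hpos h1
  have h3 : 1 / (1 + 2*x) ≤ 1 - x := by
    rw [div_le_iff₀ hpos]
    nlinarith
  linarith

/-- doubling inequality for the tail of the supremum of independent
weighted random variables (Kahane-type argument): if P(λ_m|ξ_m| > 2r) ≤ (P(λ_m|ξ_m| > r))²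
for every m, then P(sup_l λ_l|ξ_l| > 2r) ≤ 2 (P(sup_l λ_l|ξ_l| > r))². -/
theorem sup_tail_doubling
    {Ω : Type*} [MeasurableSpace Ω] (P : Measure Ω) [IsProbabilityMeasure P]
    (ξ : ℕ → Ω → ℝ) (hmeas : ∀ l, Measurable (ξ l))
    (hindep : iIndepFun ξ P)
    (lam : ℕ → ℝ) (hlam : ∀ l, 0 < lam l)
    (r : ℝ) (hr : 0 < r)
    (hCE : ∀ m, P {ω | 2 * r < lam m * |ξ m ω|} ≤ (P {ω | r < lam m * |ξ m ω|}) ^ 2) :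
    P {ω | ∃ l, 2 * r < lam l * |ξ l ω|} ≤ 2 * (P {ω | ∃ l, r < lam l * |ξ l ω|}) ^ 2 := by
  classical
  set S : ℕ → Set ℝ := fun m => {x | r < lam m * |x|} with hS
  have hSmeas : ∀ m, MeasurableSet (S m) := by
    intro m
    have : Measurable fun x : ℝ => lam m * |x| :=
      (measurable_const.mul (measurable_id.abs))
    exact measurableSet_lt measurable_const this
  set E : ℕ → Set Ω := fun m => {ω | r < lam m * |ξ m ω|} with hE
  have hEpre : ∀ m, E m = ξ m ⁻¹' S m := fun m => rfl
  have hEmeas : ∀ m, MeasurableSet (E m) := fun m => (hSmeas m).preimage (hmeas m)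
  set A : Set Ω := {ω | ∃ l, r < lam l * |ξ l ω|} with hA
  have hAU : A = ⋃ m, E m := by
    ext ω; simp [hA, hE]
  have hAmeas : MeasurableSet A := hAU ▸ MeasurableSet.iUnion fun m => hEmeas m
  have hEA : ∀ m, E m ⊆ A := fun m ω h => ⟨m, h⟩
  set B : Set Ω := {ω | ∃ l, 2 * r < lam l * |ξ l ω|} with hB
  have hBA : B ⊆ A := by
    rintro ω ⟨l, hl⟩
    exact ⟨l, by nlinarith⟩
  set C : ℕ → Set Ω := fun m => {ω | 2 * r < lam m * |ξ m ω|} with hC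
  have hBU : B = ⋃ m, C m := by ext ω; simp [hB, hC]
  -- first bound: P B ≤ ∑' (P (E m))^2
  have hPB : P B ≤ ∑' m, (P (E m)) ^ 2 := by
    calc P B ≤ ∑' m, P (C m) := hBU ▸ measure_iUnion_le C
      _ ≤ ∑' m, (P (E m)) ^ 2 := ENNReal.tsum_le_tsum fun m => hCE m
  by_cases hhalf : 2⁻¹ ≤ P A
  · -- big case: P B ≤ P A ≤ 2 (P A)^2
    have h1 : P B ≤ P A := measure_mono hBA
    have h2 : P A ≤ 2 * (P A) ^ 2 := by
      calc P A = 2 * (2⁻¹ * P A) := by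
            rw [← mul_assoc, ENNReal.mul_inv_cancel (by norm_num) (by norm_num), one_mul]
        _ ≤ 2 * (P A * P A) := by
            exact mul_le_mul_right (mul_le_mul' hhalf le_rfl) 2
        _ = 2 * (P A) ^ 2 := by rw [sq]
    exact h1.trans h2
  · push_neg at hhalf
    have hPAne : P A ≠ ⊤ := measure_ne_top P A
    set p : ℝ := (P A).toReal with hp
    have hp0 : 0 ≤ p := ENNReal.toReal_nonneg
    have hphalf : p ≤ 1/2 := by
      have := ENNReal.toReal_mono (by norm_num) hhalf.le
      simpa [hp, one_div] using this
    set a : ℕ → ℝ := fun m => (P (E m)).toReal with ha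
    have ha0 : ∀ m, 0 ≤ a m := fun m => ENNReal.toReal_nonneg
    have haE : ∀ m, P (E m) = ENNReal.ofReal (a m) := fun m =>
      (ENNReal.ofReal_toReal (measure_ne_top P _)).symm
    have ha1 : ∀ m, a m ≤ 1 := fun m =>
      ENNReal.toReal_mono (by norm_num) (prob_le_one)
    -- key: partial sums bounded by 2p
    have hsum : ∀ n : ℕ, ∑ m ∈ Finset.range n, a m ≤ 2 * p := by
      intro n
      have hinter : P (⋂ m ∈ Finset.range n, (E m)ᶜ) =
          ∏ m ∈ Finset.range n, P ((E m)ᶜ) := by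
        have := hindep.measure_inter_preimage_eq_mul (Finset.range n)
          (sets := fun m => (S m)ᶜ) (fun m _ => (hSmeas m).compl)
        simpa [hEpre, Set.preimage_compl] using this
      have hcompl_sub : A ᶜ ⊆ ⋂ m ∈ Finset.range n, (E m)ᶜ := by
        intro ω hω
        simp only [Set.mem_iInter, Set.mem_compl_iff]
        intro m _
        exact fun h => hω (hEA m h)
      have hPAc : P (Aᶜ) = 1 - P A := by
        rw [measure_compl hAmeas (measure_ne_top P A), measure_univ]
      have hPAcle : P (Aᶜ) ≤ ∏ m ∈ Finset.range n, P ((E m)ᶜ) := by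
        rw [← hinter]; exact measure_mono hcompl_sub
      -- pass to real numbers
      have hPEc : ∀ m, (P ((E m)ᶜ)).toReal = 1 - a m := by
        intro m
        rw [measure_compl (hEmeas m) (measure_ne_top P _), measure_univ]
        rw [ENNReal.toReal_sub_of_le prob_le_one (by norm_num)]
        simp [ha]
      have hprod_ne : ∏ m ∈ Finset.range n, P ((E m)ᶜ) ≠ ⊤ :=
        ENNReal.prod_ne_top fun m _ => measure_ne_top P _
      have hreal1 : 1 - p ≤ ∏ m ∈ Finset.range n, (1 - a m) := by
        have := ENNReal.toReal_mono hprod_ne hPAcle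
        rw [hPAc, ENNReal.toReal_sub_of_le prob_le_one (by norm_num),
          ENNReal.toReal_prod] at this
        simpa [hp, hPEc] using this
      have hreal2 : ∏ m ∈ Finset.range n, (1 - a m) ≤
          Real.exp (-(∑ m ∈ Finset.range n, a m)) := by
        rw [← Finset.sum_neg_distrib, Real.exp_sum]
        apply Finset.prod_le_prod
        · intro m _; linarith [ha1 m]
        · intro m _
          have := Real.add_one_le_exp (-(a m)); linarith
      have hstep : Real.exp (-(2*p)) ≤ Real.exp (-(∑ m ∈ Finset.range n, a m)) := by
        calc Real.exp (-(2*p)) ≤ 1 - p := exp_neg_two_mul_le hp0 hphalf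
          _ ≤ _ := hreal1.trans hreal2
      have := Real.exp_le_exp.mp hstep
      linarith
    -- tsum bound in ENNReal
    have htsum : ∑' m, P (E m) ≤ ENNReal.ofReal (2 * p) := by
      rw [ENNReal.tsum_eq_iSup_sum]
      apply iSup_le
      intro s
      rcases s.exists_nat_subset_range with ⟨n, hn⟩
      calc ∑ m ∈ s, P (E m) ≤ ∑ m ∈ Finset.range n, P (E m) :=
            Finset.sum_le_sum_of_subset hn
        _ = ENNReal.ofReal (∑ m ∈ Finset.range n, a m) := by
            rw [ENNReal.ofReal_sum_of_nonneg fun m _ => ha0 m]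
            exact Finset.sum_congr rfl fun m _ => haE m
        _ ≤ ENNReal.ofReal (2 * p) := ENNReal.ofReal_le_ofReal (hsum n)
    have hofReal : ENNReal.ofReal (2 * p) = 2 * P A := by
      rw [ENNReal.ofReal_mul (by norm_num), hp, ENNReal.ofReal_toReal hPAne]
      norm_num
    calc P B ≤ ∑' m, (P (E m)) ^ 2 := hPB
      _ ≤ ∑' m, P (E m) * P A := by
          apply ENNReal.tsum_le_tsum
          intro m
          rw [sq]
          exact mul_le_mul_right (measure_mono (hEA m)) _
      _ = (∑' m, P (E m)) * P A := ENNReal.tsum_mul_right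
      _ ≤ ENNReal.ofReal (2 * p) * P A := mul_le_mul_left htsum _
      _ = 2 * P A * P A := by rw [hofReal]
      _ = 2 * (P A) ^ 2 := by rw [sq, mul_assoc]
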